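/- The third power moment of the Walsh transform satisfies P_3 = Σ_{a ∈ GF(2^m)^*} W_d(a)^3 = 2^{2m} · |V|, where V = { x ∈ GF(2^m) : 1 + x^d + (1 + x)^d = 0 }. -/

import Mathlib

open Finset

/-- `(-1)^{Tr(y)}` as an integer, where `Tr` is the absolute trace to `GF(2)`. -/
noncomputable def sgn (F : Type*) [Field F] [Fintype F] [Algebra (ZMod 2) F] (y : F) : ℤ :=
  if Algebra.trace (ZMod 2) F y = 0 then 1 else -1

/-- The Walsh transform `W_d(a) = Σ_{x ∈ GF(2^m)} (-1)^{Tr(x^d + a x)}`. -/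
noncomputable def Wd (F : Type*) [Field F] [Fintype F] [Algebra (ZMod 2) F]
    (d : ℕ) (a : F) : ℤ :=
  ∑ x : F, sgn F (x ^ d + a * x)

section Aux
variable (F : Type*) [Field F] [Fintype F] [DecidableEq F] [Algebra (ZMod 2) F]

lemma sgn_zero : sgn F 0 = 1 := by simp [sgn]

lemma sgn_add (u v : F) : sgn F (u + v) = sgn F u * sgn F v := by
  unfold sgn
  rw [map_add]
  generalize Algebra.trace (ZMod 2) F u = a
  generalize Algebra.trace (ZMod 2) F v = b
  revert a b; decide

lemma sum_sgn : ∑ x : F, sgn F x = 0 := by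
  have : Module.Finite (ZMod 2) F := Module.finite_iff_finite.mpr inferInstance
  obtain ⟨c, hc⟩ := Algebra.trace_surjective (ZMod 2) F 1
  have hs : sgn F c = -1 := by simp [sgn, hc]
  have h1 : ∑ x : F, sgn F (x + c) = ∑ x : F, sgn F x :=
    Fintype.sum_bijective (· + c) (Equiv.addRight c).bijective _ _ fun x => rfl
  have h2 : ∑ x : F, sgn F (x + c) = -∑ x : F, sgn F x := by
    simp only [sgn_add, hs, mul_neg, mul_one, ← Finset.sum_neg_distrib]
  omega

lemma sum_sgn_linear (s t : F) :
    ∑ a : F, sgn F (s + a * t) = if t = 0 then (Fintype.card F : ℤ) * sgn F s else 0 := by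
  split_ifs with h
  · subst h; simp [Finset.sum_const, mul_comm]
  · have h1 : ∑ a : F, sgn F (s + a * t) = ∑ u : F, sgn F (s + u) :=
      Fintype.sum_bijective (· * t) (Equiv.mulRight₀ t h).bijective _ _ fun a => rfl
    rw [h1]
    simp [sgn_add, ← Finset.mul_sum, sum_sgn]

lemma pow_d_bijective {m : ℕ} (hF : Fintype.card F = 2 ^ m) {d : ℕ}
    (hd : Nat.Coprime d (2 ^ m - 1)) (hd0 : d ≠ 0) :
    Function.Bijective (fun x : F => x ^ d) := by
  rw [Finite.injective_iff_bijective.symm]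
  intro x y h
  simp only at h
  rcases eq_or_ne y 0 with rfl | hy
  · rw [zero_pow hd0, pow_eq_zero_iff hd0] at h; exact h
  rcases eq_or_ne x 0 with rfl | hx
  · rw [zero_pow hd0, eq_comm, pow_eq_zero_iff hd0] at h; exact h.symm
  have hcard : (Nat.card Fˣ).Coprime d := by
    rw [Nat.card_eq_fintype_card, Fintype.card_units, hF]
    exact hd.symm
  have := (powCoprime hcard).injective (a₁ := Units.mk0 x hx) (a₂ := Units.mk0 y hy)
  have hu : Units.mk0 x hx = Units.mk0 y hy := by
    apply this
    ext
    simpa using h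
  simpa using congrArg Units.val hu

end Aux

/-- the third power moment equals 2^(2m) * |V|, where V is the set of
roots of 1 + x^d + (1+x)^d in GF(2^m). -/
theorem stmt_6 {m : ℕ} (hm : 1 ≤ m) (F : Type*) [Field F] [Fintype F] [DecidableEq F]
    [Algebra (ZMod 2) F] (hF : Fintype.card F = 2 ^ m)
    (d : ℕ) (hd : Nat.Coprime d (2 ^ m - 1)) :
    ∑ a ∈ Finset.univ \ {(0 : F)}, Wd F d a ^ 3 =
      2 ^ (2 * m) *
        ((Finset.univ.filter fun x : F => 1 + x ^ d + (1 + x) ^ d = 0).card : ℤ) := by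
  haveI : CharP F 2 := charP_of_injective_algebraMap (algebraMap (ZMod 2) F).injective 2
  have h2 : (2 : F) = 0 := by exact_mod_cast CharP.cast_eq_zero F 2
  have hq : (Fintype.card F : ℤ) = 2 ^ m := by exact_mod_cast congrArg (Nat.cast : ℕ → ℤ) hF
  rcases eq_or_ne d 0 with rfl | hd0
  · -- degenerate case d = 0
    have hfil : (Finset.univ.filter fun x : F => 1 + x ^ 0 + (1 + x) ^ 0 = 0) = ∅ := by
      ext x
      simp only [Finset.mem_filter, Finset.mem_univ, true_and, Finset.notMem_empty, iff_false,
        pow_zero]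
      intro h
      exact one_ne_zero (α := F) (by linear_combination h - h2)
    rw [hfil]
    simp only [Finset.card_empty, Nat.cast_zero, mul_zero]
    apply Finset.sum_eq_zero
    intro a ha
    have ha0 : a ≠ 0 := by
      simp only [Finset.mem_sdiff, Finset.mem_singleton, Finset.mem_univ, true_and] at ha
      exact ha
    have hW : Wd F 0 a = 0 := by
      rw [Wd]
      simp only [pow_zero]
      have h := sum_sgn_linear F 1 a
      rw [if_neg ha0] at h
      rw [← h]
      exact Finset.sum_congr rfl fun x _ => by rw [mul_comm]
    rw [hW]; ring
  · -- main case d ≠ 0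
    have hbij := pow_d_bijective F hF hd hd0
    have hW0 : Wd F d 0 = 0 := by
      rw [Wd]
      simp only [zero_mul, add_zero]
      rw [Fintype.sum_bijective _ hbij (fun x : F => sgn F (x ^ d)) (fun x => sgn F x)
        (fun x => rfl)]
      exact sum_sgn F
    -- cube expansion of the Walsh transform
    have key3 : ∀ a : F, Wd F d a ^ 3 =
        ∑ x : F, ∑ y : F, ∑ z : F,
          sgn F ((x ^ d + y ^ d + z ^ d) + a * (x + y + z)) := by
      intro a
      have e0 : Wd F d a ^ 3 = Wd F d a * Wd F d a * Wd F d a := by ring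
      have e1 : Wd F d a * Wd F d a * Wd F d a = ∑ x : F, ∑ y : F, ∑ z : F,
          sgn F (x ^ d + a * x) * sgn F (y ^ d + a * y) * sgn F (z ^ d + a * z) := by
        rw [Wd, Finset.sum_mul_sum, Finset.sum_mul]
        refine Finset.sum_congr rfl fun x _ => ?_
        rw [Finset.sum_mul]
        refine Finset.sum_congr rfl fun y _ => ?_
        rw [Finset.mul_sum]
      rw [e0, e1]
      refine Finset.sum_congr rfl fun x _ => Finset.sum_congr rfl fun y _ =>
        Finset.sum_congr rfl fun z _ => ?_
      rw [← sgn_add, ← sgn_add]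
      congr 1
      ring
    -- the full power moment
    have hsum : ∑ a : F, Wd F d a ^ 3 = (Fintype.card F : ℤ) *
        ∑ x : F, ∑ y : F, sgn F (x ^ d + y ^ d + (x + y) ^ d) := by
      calc ∑ a : F, Wd F d a ^ 3
          = ∑ a : F, ∑ x : F, ∑ y : F, ∑ z : F,
              sgn F ((x ^ d + y ^ d + z ^ d) + a * (x + y + z)) :=
            Finset.sum_congr rfl fun a _ => key3 a
        _ = ∑ x : F, ∑ y : F, ∑ z : F, ∑ a : F,
              sgn F ((x ^ d + y ^ d + z ^ d) + a * (x + y + z)) := by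
            rw [Finset.sum_comm]
            refine Finset.sum_congr rfl fun x _ => ?_
            rw [Finset.sum_comm]
            refine Finset.sum_congr rfl fun y _ => ?_
            rw [Finset.sum_comm]
        _ = ∑ x : F, ∑ y : F, ∑ z : F,
              (if x + y + z = 0 then (Fintype.card F : ℤ) * sgn F (x ^ d + y ^ d + z ^ d)
               else 0) := by
            refine Finset.sum_congr rfl fun x _ => Finset.sum_congr rfl fun y _ =>
              Finset.sum_congr rfl fun z _ => ?_
            rw [sum_sgn_linear]
        _ = ∑ x : F, ∑ y : F,
              (Fintype.card F : ℤ) * sgn F (x ^ d + y ^ d + (x + y) ^ d) := by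
            refine Finset.sum_congr rfl fun x _ => Finset.sum_congr rfl fun y _ => ?_
            have hcond : ∀ z : F, (x + y + z = 0) = (x + y = z) := by
              intro z
              apply propext
              constructor
              · intro h; linear_combination h - z * h2
              · intro h; linear_combination h + z * h2
            simp only [hcond]
            rw [Finset.sum_ite_eq]
            simp
        _ = (Fintype.card F : ℤ) * ∑ x : F, ∑ y : F,
              sgn F (x ^ d + y ^ d + (x + y) ^ d) := by
            rw [Finset.mul_sum]
            exact Finset.sum_congr rfl fun x _ => (Finset.mul_sum _ _ _).symm
    -- inner sum over nonzero x
    have inner : ∀ c : F, ∑ x ∈ Finset.univ.erase (0 : F), sgn F (x ^ d * c)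
        = if c = 0 then (Fintype.card F : ℤ) - 1 else -1 := by
      intro c
      split_ifs with hc
      · subst hc
        simp only [mul_zero, sgn_zero, Finset.sum_const, nsmul_eq_mul, mul_one]
        rw [Finset.card_erase_of_mem (Finset.mem_univ 0), Finset.card_univ]
        have : 1 ≤ Fintype.card F := Fintype.card_pos
        push_cast [Nat.cast_sub this]
        ring
      · have hfull : ∑ x : F, sgn F (x ^ d * c) = 0 := by
          rw [Fintype.sum_bijective _ hbij (fun x : F => sgn F (x ^ d * c))
            (fun u : F => sgn F (u * c)) (fun x => rfl)]
          rw [Fintype.sum_bijective (· * c) (Equiv.mulRight₀ c hc).bijective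
            (fun u : F => sgn F (u * c)) (fun v : F => sgn F v) (fun u => rfl)]
          exact sum_sgn F
        have hsplit := Finset.add_sum_erase Finset.univ
          (fun x : F => sgn F (x ^ d * c)) (Finset.mem_univ 0)
        rw [hfull] at hsplit
        simp only [zero_pow hd0, zero_mul, sgn_zero] at hsplit
        linarith
    -- computing T2
    have hT2 : ∑ x : F, ∑ y : F, sgn F (x ^ d + y ^ d + (x + y) ^ d)
        = (Fintype.card F : ℤ) *
          ((Finset.univ.filter fun x : F => 1 + x ^ d + (1 + x) ^ d = 0).card : ℤ) := by
      rw [← Finset.add_sum_erase Finset.univ _ (Finset.mem_univ (0 : F))]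
      have hrow0 : ∑ y : F, sgn F ((0 : F) ^ d + y ^ d + (0 + y) ^ d)
          = (Fintype.card F : ℤ) := by
        have : ∀ y : F, (0 : F) ^ d + y ^ d + (0 + y) ^ d = 0 := by
          intro y
          rw [zero_pow hd0, zero_add, zero_add, CharTwo.add_self_eq_zero]
        simp only [this, sgn_zero, Finset.sum_const, nsmul_eq_mul, mul_one, Finset.card_univ]
      have hrows : ∑ x ∈ Finset.univ.erase (0 : F),
            ∑ y : F, sgn F (x ^ d + y ^ d + (x + y) ^ d)
          = ∑ x ∈ Finset.univ.erase (0 : F),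
            ∑ t : F, sgn F (x ^ d * (1 + t ^ d + (1 + t) ^ d)) := by
        refine Finset.sum_congr rfl fun x hx => ?_
        have hx0 : x ≠ 0 := (Finset.mem_erase.mp hx).1
        rw [← Fintype.sum_bijective (fun t : F => x * t) (Equiv.mulLeft₀ x hx0).bijective
          (fun t : F => sgn F (x ^ d + (x * t) ^ d + (x + x * t) ^ d))
          (fun y : F => sgn F (x ^ d + y ^ d + (x + y) ^ d)) (fun t => rfl)]
        refine Finset.sum_congr rfl fun t _ => ?_
        congr 1
        rw [show x + x * t = x * (1 + t) by ring, mul_pow, mul_pow]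
        ring
      rw [hrows, hrow0, Finset.sum_comm]
      have : ∀ t : F, ∑ x ∈ Finset.univ.erase (0 : F),
            sgn F (x ^ d * (1 + t ^ d + (1 + t) ^ d))
          = (if 1 + t ^ d + (1 + t) ^ d = 0 then (Fintype.card F : ℤ) else 0) - 1 := by
        intro t
        rw [inner]
        split_ifs <;> ring
      simp only [this]
      rw [Finset.sum_sub_distrib]
      simp only [Finset.sum_ite, Finset.sum_const, Finset.sum_const_zero, smul_zero,
        add_zero, Finset.card_univ, nsmul_eq_mul, mul_one]
      ring
    -- putting everything together
    rw [Finset.sdiff_singleton_eq_erase]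
    have hsplit := Finset.add_sum_erase Finset.univ (fun a : F => Wd F d a ^ 3)
      (Finset.mem_univ (0 : F))
    have herase : ∑ a ∈ Finset.univ.erase (0 : F), Wd F d a ^ 3
        = ∑ a : F, Wd F d a ^ 3 := by
      rw [← hsplit]
      simp [hW0]
    rw [herase, hsum, hT2, hq]
    ring
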